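/- arXiv:1505.05055 — 2 statements merged into one kernel-verified Lean document; each statement's English description precedes it below -/
import Mathlib

section
/- In a tree that is uniformly refined to level L, a contiguous segment of the Morton curve that begins with the first level-L quadrant creates exactly one face-connected subdomain, no matter where it ends. Precisely: for every b with 0 ≤ b < 2^{dL}, the set of level-L quadrants {Q : 0 ≤ Q ≤ b} is face-connected. -/
namespace MortonAux

/-- The `k`-th binary digit of `n`. -/
def mbit (n k : ℕ) : ℕ := n / 2 ^ k % 2

lemma mbit_split (e H M k : ℕ) (hM : M < 2 ^ e) :
    mbit (2 ^ e * H + M) k = if k < e then mbit M k else mbit H (k - e) := by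
  unfold mbit
  rcases lt_or_ge k e with h | h
  · rw [if_pos h]
    have hdvd : 2 ^ k ∣ 2 ^ e * H := dvd_mul_of_dvd_left (pow_dvd_pow 2 h.le) H
    rw [Nat.add_div_of_dvd_right hdvd]
    have he : 2 ^ e = 2 ^ k * 2 ^ (e - k) := by rw [← pow_add]; congr 1; omega
    have h2 : 2 ^ e * H / 2 ^ k = 2 ^ (e - k) * H := by
      rw [he, mul_assoc, Nat.mul_div_cancel_left _ (Nat.two_pow_pos k)]
    rw [h2]
    have h3 : 2 ∣ 2 ^ (e - k) * H := by
      exact Dvd.dvd.mul_right (dvd_pow_self 2 (by omega)) H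
    omega
  · rw [if_neg (not_lt.mpr h)]
    have hk : 2 ^ k = 2 ^ e * 2 ^ (k - e) := by rw [← pow_add]; congr 1; omega
    rw [hk, ← Nat.div_div_eq_div_mul,
      Nat.mul_add_div (Nat.two_pow_pos e),
      Nat.div_eq_of_lt hM, add_zero]

lemma mbit_two_pow (i k : ℕ) : mbit (2 ^ i) k = if k = i then 1 else 0 := by
  unfold mbit
  rcases lt_trichotomy k i with h | h | h
  · rw [if_neg h.ne]
    have : 2 ^ i / 2 ^ k = 2 ^ (i - k) := Nat.pow_div h.le (by norm_num)
    rw [this]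
    have : 2 ∣ 2 ^ (i - k) := dvd_pow_self 2 (by omega)
    omega
  · subst h; rw [if_pos rfl, Nat.div_self (Nat.two_pow_pos k)]
  · rw [if_neg h.ne', Nat.div_eq_of_lt (Nat.pow_lt_pow_right (by norm_num) h)]

/-- `emm n t d = ∑_{ℓ<n} 2^(ℓ d + t)`, the number whose coordinate `t+1` is `2^n - 1`
and all other coordinates are zero. -/
def emm (n t d : ℕ) : ℕ := ∑ ℓ ∈ Finset.range n, 2 ^ (ℓ * d + t)

lemma emm_succ (n t d : ℕ) : emm (n + 1) t d = 2 ^ d * emm n t d + 2 ^ t := by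
  unfold emm
  rw [Finset.sum_range_succ' (fun ℓ => 2 ^ (ℓ * d + t)) n, Finset.mul_sum]
  congr 1
  · apply Finset.sum_congr rfl; intro ℓ _
    rw [← pow_add]; congr 1; ring
  · simp

lemma emm_lt (t d : ℕ) (ht : t < d) : ∀ n, emm n t d < 2 ^ (n * d + t) := by
  intro n
  induction n with
  | zero => simp [emm]
  | succ n ih =>
    rw [emm_succ]
    have h1 : 2 ^ d * emm n t d + 2 ^ d ≤ 2 ^ d * 2 ^ (n * d + t) := by
      have := Nat.succ_le_of_lt ih
      calc 2 ^ d * emm n t d + 2 ^ d = 2 ^ d * (emm n t d + 1) := by ring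
        _ ≤ 2 ^ d * 2 ^ (n * d + t) := Nat.mul_le_mul_left _ this
    have h2 : 2 ^ t < 2 ^ d := Nat.pow_lt_pow_right (by norm_num) ht
    have h3 : (2:ℕ) ^ d * 2 ^ (n * d + t) = 2 ^ ((n + 1) * d + t) := by
      rw [← pow_add]; congr 1; ring
    omega

lemma mbit_emm (t d s : ℕ) (ht : t < d) (hs : s < d) :
    ∀ n ℓ, mbit (emm n t d) (ℓ * d + s) = if s = t ∧ ℓ < n then 1 else 0 := by
  intro n
  induction n with
  | zero => intro ℓ; simp [emm, mbit]
  | succ n ih =>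
    intro ℓ
    rw [emm_succ]
    rw [mbit_split d (emm n t d) (2 ^ t) _ (Nat.pow_lt_pow_right (by norm_num) ht)]
    rcases Nat.eq_zero_or_pos ℓ with h0 | hpos
    · subst h0
      rw [if_pos (by simpa using hs)]
      simp only [zero_mul, zero_add]
      rw [mbit_two_pow]
      by_cases hst : s = t <;> simp [hst, Nat.succ_pos]
    · obtain ⟨m, rfl⟩ : ∃ m, ℓ = m + 1 := ⟨ℓ - 1, by omega⟩
      have hge : ¬ (m + 1) * d + s < d := by
        have : d ≤ (m + 1) * d := Nat.le_mul_of_pos_left d (by omega)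
        omega
      rw [if_neg hge]
      have harith : (m + 1) * d + s - d = m * d + s := by
        have : (m + 1) * d = m * d + d := by ring
        omega
      rw [harith, ih m]
      by_cases hst : s = t <;> simp [hst] <;> omega

lemma sum_two_pow (n : ℕ) : ∑ ℓ ∈ Finset.range n, 2 ^ ℓ = 2 ^ n - 1 := by
  induction n with
  | zero => simp
  | succ n ih =>
    rw [Finset.sum_range_succ, ih]
    have : (1:ℕ) ≤ 2 ^ n := Nat.one_le_two_pow
    have : (2:ℕ) ^ (n + 1) = 2 * 2 ^ n := by ring
    omega

end MortonAux

/-- The `r`-th coordinate (1 ≤ r ≤ d) of a level-`L` quadrant `Q` in dimension `d`. -/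
def mortonCoord (d L r Q : ℕ) : ℕ :=
  ∑ ℓ ∈ Finset.range L, (Q / 2 ^ (ℓ * d + (r - 1)) % 2) * 2 ^ ℓ

/-- Two level-`L` quadrants are face-neighbors: they differ by exactly one in exactly
one coordinate and agree in all other coordinates. -/
def MortonFaceNbr (d L Q Q' : ℕ) : Prop :=
  Q ≠ Q' ∧ ∃ r, 1 ≤ r ∧ r ≤ d ∧
    ((mortonCoord d L r Q : ℤ) - (mortonCoord d L r Q' : ℤ)).natAbs = 1 ∧
    ∀ s, 1 ≤ s → s ≤ d → s ≠ r → mortonCoord d L s Q = mortonCoord d L s Q'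

namespace MortonAux

lemma mortonCoord_eq (d L r Q : ℕ) :
    mortonCoord d L r Q = ∑ ℓ ∈ Finset.range L, mbit Q (ℓ * d + (r - 1)) * 2 ^ ℓ := rfl

lemma exists_lt_nbr (d L Q : ℕ) (hd : 1 ≤ d) (hQ0 : 0 < Q) (hQL : Q < 2 ^ (d * L)) :
    ∃ Q', Q' < Q ∧ MortonFaceNbr d L Q Q' := by
  obtain ⟨i, q, hq2, hQeq⟩ := Nat.exists_eq_pow_mul_and_not_dvd hQ0.ne' 2 (by norm_num)
  obtain ⟨h, rfl⟩ : ∃ h, q = 2 * h + 1 := ⟨q / 2, by omega⟩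
  set t := i % d with ht_def
  set ℓ0 := i / d with hℓ0_def
  have ht : t < d := Nat.mod_lt _ (by omega)
  have hti : ℓ0 * d + t = i := by rw [mul_comm]; exact Nat.div_add_mod i d
  have hQexp : Q = 2 ^ (i + 1) * h + 2 ^ i := by rw [hQeq]; ring
  have hiL : i < d * L := by
    have h1 : 2 ^ i ≤ Q := by rw [hQexp]; omega
    have := lt_of_le_of_lt h1 hQL
    exact (Nat.pow_lt_pow_iff_right (by norm_num)).mp this
  have hℓ0L : ℓ0 < L := by
    rw [hℓ0_def, Nat.div_lt_iff_lt_mul (by omega : 0 < d), mul_comm L d]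
    exact hiL
  have hMi : emm ℓ0 t d < 2 ^ i := by rw [← hti]; exact emm_lt t d ht ℓ0
  set Q' := 2 ^ (i + 1) * h + emm ℓ0 t d with hQ'_def
  have hQ'lt : Q' < Q := by rw [hQexp]; omega
  -- bit formulas
  have hbitQ : ∀ k, mbit Q k =
      if k < i + 1 then (if k = i then 1 else 0) else mbit h (k - (i + 1)) := by
    intro k
    rw [hQexp, mbit_split (i + 1) h (2 ^ i) k (Nat.pow_lt_pow_right (by norm_num) (by omega)),
      mbit_two_pow]
  have hbitQ' : ∀ k, mbit Q' k =
      if k < i + 1 then mbit (emm ℓ0 t d) k else mbit h (k - (i + 1)) := by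
    intro k
    rw [hQ'_def, mbit_split (i + 1) h (emm ℓ0 t d) k
      (lt_trans hMi (Nat.pow_lt_pow_right (by norm_num) (by omega)))]
  -- key coordinate computation at r = t + 1
  have hcoord_r : mortonCoord d L (t + 1) Q = mortonCoord d L (t + 1) Q' + 1 := by
    rw [mortonCoord_eq, mortonCoord_eq]
    simp only [Nat.add_sub_cancel]
    have hsplit : ∀ n : ℕ,
        (∑ ℓ ∈ Finset.range (ℓ0 + 1), mbit n (ℓ * d + t) * 2 ^ ℓ) +
          ∑ ℓ ∈ Finset.Ico (ℓ0 + 1) L, mbit n (ℓ * d + t) * 2 ^ ℓ =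
          ∑ ℓ ∈ Finset.range L, mbit n (ℓ * d + t) * 2 ^ ℓ :=
      fun n => Finset.sum_range_add_sum_Ico _ (by omega)
    rw [← hsplit Q, ← hsplit Q']
    have htail : ∀ ℓ ∈ Finset.Ico (ℓ0 + 1) L,
        mbit Q (ℓ * d + t) * 2 ^ ℓ = mbit Q' (ℓ * d + t) * 2 ^ ℓ := by
      intro ℓ hℓ
      rw [Finset.mem_Ico] at hℓ
      have hbig : ¬ (ℓ * d + t < i + 1) := by
        have : (ℓ0 + 1) * d ≤ ℓ * d := Nat.mul_le_mul_right d hℓ.1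
        have : ℓ0 * d + d ≤ ℓ * d := by nlinarith
        omega
      rw [hbitQ, hbitQ', if_neg hbig, if_neg hbig]
    rw [Finset.sum_congr rfl htail]
    have hheadQ : (∑ ℓ ∈ Finset.range (ℓ0 + 1), mbit Q (ℓ * d + t) * 2 ^ ℓ) = 2 ^ ℓ0 := by
      have : ∀ ℓ ∈ Finset.range (ℓ0 + 1),
          mbit Q (ℓ * d + t) * 2 ^ ℓ = (if ℓ = ℓ0 then 2 ^ ℓ0 else 0) := by
        intro ℓ hℓ
        rw [Finset.mem_range] at hℓ
        have hsmall : ℓ * d + t < i + 1 := by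
          have : ℓ * d ≤ ℓ0 * d := Nat.mul_le_mul_right d (by omega)
          omega
        rw [hbitQ, if_pos hsmall]
        by_cases he : ℓ = ℓ0
        · subst he; rw [if_pos hti, if_pos rfl, one_mul]
        · have : ℓ * d + t ≠ i := by
            intro hc
            apply he
            have : ℓ * d = ℓ0 * d := by omega
            exact Nat.eq_of_mul_eq_mul_right (by omega) this
          rw [if_neg this, if_neg he, zero_mul]
      rw [Finset.sum_congr rfl this, Finset.sum_ite_eq' _ ℓ0 _,
        if_pos (Finset.mem_range.mpr (by omega))]
    have hheadQ' : (∑ ℓ ∈ Finset.range (ℓ0 + 1), mbit Q' (ℓ * d + t) * 2 ^ ℓ)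
        = 2 ^ ℓ0 - 1 := by
      have : ∀ ℓ ∈ Finset.range (ℓ0 + 1),
          mbit Q' (ℓ * d + t) * 2 ^ ℓ = (if ℓ < ℓ0 then 2 ^ ℓ else 0) := by
        intro ℓ hℓ
        rw [Finset.mem_range] at hℓ
        have hsmall : ℓ * d + t < i + 1 := by
          have : ℓ * d ≤ ℓ0 * d := Nat.mul_le_mul_right d (by omega)
          omega
        rw [hbitQ', if_pos hsmall, mbit_emm t d t ht ht ℓ0 ℓ]
        by_cases hlt : ℓ < ℓ0
        · rw [if_pos ⟨rfl, hlt⟩, if_pos hlt, one_mul]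
        · rw [if_neg (by tauto), if_neg hlt, zero_mul]
      rw [Finset.sum_congr rfl this, Finset.sum_range_succ, if_neg (lt_irrefl _), add_zero]
      rw [show (∑ ℓ ∈ Finset.range ℓ0, if ℓ < ℓ0 then (2:ℕ) ^ ℓ else 0)
          = ∑ ℓ ∈ Finset.range ℓ0, 2 ^ ℓ from
        Finset.sum_congr rfl fun x hx => if_pos (Finset.mem_range.mp hx), sum_two_pow]
    rw [hheadQ, hheadQ']
    have : (1:ℕ) ≤ 2 ^ ℓ0 := Nat.one_le_two_pow
    omega
  refine ⟨Q', hQ'lt, ?_, ⟨t + 1, by omega, by omega, ?_, ?_⟩⟩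
  · intro hc; rw [hc] at hcoord_r; omega
  · rw [hcoord_r]; push_cast; omega
  · intro s hs1 hs2 hsr
    rw [mortonCoord_eq, mortonCoord_eq]
    apply Finset.sum_congr rfl
    intro ℓ _
    congr 1
    have hs'd : s - 1 < d := by omega
    have hs't : s - 1 ≠ t := by omega
    rw [hbitQ, hbitQ']
    by_cases hk : ℓ * d + (s - 1) < i + 1
    · rw [if_pos hk, if_pos hk, mbit_emm t d (s - 1) ht hs'd ℓ0 ℓ]
      have hne : ℓ * d + (s - 1) ≠ i := by
        intro hc
        apply hs't
        have h1 : (ℓ * d + (s - 1)) % d = s - 1 := by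
          rw [mul_comm ℓ d, Nat.mul_add_mod, Nat.mod_eq_of_lt hs'd]
        rw [hc] at h1
        omega
      rw [if_neg hne, if_neg (by tauto)]
    · rw [if_neg hk, if_neg hk]

end MortonAux

namespace MortonAux

lemma nbr_symm {d L a b : ℕ} (h : MortonFaceNbr d L a b) : MortonFaceNbr d L b a := by
  obtain ⟨hne, r, h1, h2, h3, h4⟩ := h
  exact ⟨hne.symm, r, h1, h2, by omega,
    fun s hs1 hs2 hs3 => (h4 s hs1 hs2 hs3).symm⟩

end MortonAux

/-- A set of level-`L` quadrants is face-connected: the graph on `S` whose edges join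
face-neighbors is connected. -/
def MortonFaceConnected (d L : ℕ) (S : Set ℕ) : Prop :=
  ∀ Q ∈ S, ∀ Q' ∈ S,
    Relation.ReflTransGen (fun a b => a ∈ S ∧ b ∈ S ∧ MortonFaceNbr d L a b) Q Q'

/-- `S` has at most `n` face-connected components: it can be written as a union of `n`
face-connected subsets. -/
def MortonCompBound (d L : ℕ) (S : Set ℕ) (n : ℕ) : Prop :=
  ∃ f : Fin n → Set ℕ, S = ⋃ i, f i ∧ ∀ i, MortonFaceConnected d L (f i)

/-- In a tree uniformly refined to level `L`, a contiguous segment of the Morton curve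
beginning with the first level-`L` quadrant is face-connected, no matter where it ends. -/
theorem morton_segment_from_first_connected (d L b : ℕ) (hd : 1 ≤ d)
    (hb : b < 2 ^ (d * L)) :
    MortonFaceConnected d L (Set.Iic b) := by
  have hzero : ∀ Q, Q ≤ b → Relation.ReflTransGen
      (fun a c => a ∈ Set.Iic b ∧ c ∈ Set.Iic b ∧ MortonFaceNbr d L a c) Q 0 := by
    intro Q
    induction Q using Nat.strong_induction_on with
    | _ Q ih =>
      intro hQb
      rcases Nat.eq_zero_or_pos Q with h0 | hpos
      · subst h0; exact Relation.ReflTransGen.refl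
      · obtain ⟨Q', hlt, hnbr⟩ :=
          MortonAux.exists_lt_nbr d L Q hd hpos (lt_of_le_of_lt hQb hb)
        exact Relation.ReflTransGen.head ⟨hQb, le_trans hlt.le hQb, hnbr⟩
          (ih Q' hlt (le_trans hlt.le hQb))
  intro Q hQ Q' hQ'
  have hsym : Symmetric
      (fun a c => a ∈ Set.Iic b ∧ c ∈ Set.Iic b ∧ MortonFaceNbr d L a c) := by
    rintro a c ⟨h1, h2, h3⟩
    exact ⟨h2, h1, MortonAux.nbr_symm h3⟩
  exact (hzero Q hQ).trans ((@Relation.ReflTransGen.stdSymm _ _ ⟨hsym⟩).symm _ _ (hzero Q' hQ'))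
end

section
/- In a tree that is uniformly refined to level L, any contiguous segment of the Morton curve creates no more than two distinct face-connected subdomains. Precisely: for all a, b with 0 ≤ a ≤ b < 2^{dL}, the set of level-L quadrants {Q : a ≤ Q ≤ b} has at most two face-connected components. -/
/-- binary digit -/
def mdigit (Q i : ℕ) : ℕ := Q / 2 ^ i % 2

lemma mdigit_two_pow (p i : ℕ) : mdigit (2 ^ p) i = if i = p then 1 else 0 := by
  unfold mdigit
  rcases lt_trichotomy i p with h | h | h
  · rw [if_neg h.ne]
    have h1 : 2 ^ p / 2 ^ i = 2 ^ (p - i) := Nat.pow_div (le_of_lt h) (by norm_num)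
    rw [h1, Nat.pow_mod]
    norm_num
    rw [zero_pow (Nat.sub_ne_zero_of_lt h)]
    simp
  · subst h; simp [Nat.div_self (Nat.two_pow_pos i)]
  · rw [if_neg h.ne']
    have : (2:ℕ) ^ p < 2 ^ i := Nat.pow_lt_pow_right (by norm_num) h
    simp [Nat.div_eq_of_lt this]

lemma mdigit_eq_zero_of_lt {Q i : ℕ} (h : Q < 2 ^ i) : mdigit Q i = 0 := by
  unfold mdigit; rw [Nat.div_eq_of_lt h]

lemma mdigit_succ (z i : ℕ) : mdigit z (i + 1) = mdigit (z / 2) i := by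
  unfold mdigit
  rw [Nat.div_div_eq_div_mul, pow_succ, mul_comm (2 ^ i) 2, ← pow_succ']

/-- no-carry addition of digits -/
lemma mdigit_add (x y : ℕ) (h : ∀ i, mdigit x i = 0 ∨ mdigit y i = 0) (i : ℕ) :
    mdigit (x + y) i = mdigit x i + mdigit y i := by
  induction i generalizing x y with
  | zero =>
    have h0 := h 0
    unfold mdigit at *
    simp only [pow_zero, Nat.div_one] at *
    omega
  | succ i ih =>
    have h0 := h 0
    unfold mdigit at h0
    simp only [pow_zero, Nat.div_one] at h0
    have hx := Nat.div_add_mod x 2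
    have hy := Nat.div_add_mod y 2
    have hdiv : (x + y) / 2 = x / 2 + y / 2 := by omega
    rw [mdigit_succ, mdigit_succ, mdigit_succ, hdiv]
    exact ih (x / 2) (y / 2) (fun k => by rw [← mdigit_succ, ← mdigit_succ]; exact h (k + 1))

lemma mdigit_sum_pow (F : Finset ℕ) (i : ℕ) :
    mdigit (∑ p ∈ F, 2 ^ p) i = if i ∈ F then 1 else 0 := by
  induction F using Finset.induction_on generalizing i with
  | empty => simp [mdigit]
  | @insert a F ha ih =>
    rw [Finset.sum_insert ha]
    rw [mdigit_add _ _ (fun k => by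
      rw [mdigit_two_pow, ih]
      rcases eq_or_ne k a with rfl | hk
      · right; simp [ha]
      · left; simp [hk])]
    rw [mdigit_two_pow, ih]
    rcases eq_or_ne i a with rfl | hi
    · simp [ha]
    · simp [hi]

lemma sum_range_two_pow (n : ℕ) : ∑ p ∈ Finset.range n, 2 ^ p = 2 ^ n - 1 := by
  induction n with
  | zero => simp
  | succ n ih => rw [Finset.sum_range_succ, ih]; have := Nat.one_le_two_pow (n := n); omega

/-- digits of a block-shift are disjoint -/
lemma mdigit_disj_block {m x J : ℕ} (hm : m % 2 ^ J = 0) (hx : x < 2 ^ J) :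
    ∀ i, mdigit m i = 0 ∨ mdigit x i = 0 := by
  intro i
  rcases lt_or_ge i J with h | h
  · left
    obtain ⟨t, rfl⟩ := Nat.dvd_of_mod_eq_zero hm
    unfold mdigit
    have h1 : 2 ^ J * t / 2 ^ i = 2 ^ (J - i) * t := by
      have h2 : (2:ℕ) ^ J = 2 ^ i * 2 ^ (J - i) := by
        rw [← pow_add]; congr 1; omega
      rw [h2, mul_assoc, Nat.mul_div_cancel_left _ (Nat.two_pow_pos i)]
    rw [h1, Nat.mul_mod, Nat.pow_mod]
    simp [Nat.sub_ne_zero_of_lt h, zero_pow]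
  · right; exact mdigit_eq_zero_of_lt (lt_of_lt_of_le hx (Nat.pow_le_pow_right (by norm_num) h))

lemma mortonCoord_eq (d L r Q : ℕ) :
    mortonCoord d L r Q = ∑ ℓ ∈ Finset.range L, mdigit Q (ℓ * d + (r - 1)) * 2 ^ ℓ := rfl

lemma mortonCoord_add (d L r : ℕ) {x y : ℕ} (h : ∀ i, mdigit x i = 0 ∨ mdigit y i = 0) :
    mortonCoord d L r (x + y) = mortonCoord d L r x + mortonCoord d L r y := by
  simp only [mortonCoord_eq, ← Finset.sum_add_distrib]
  exact Finset.sum_congr rfl fun ℓ _ => by rw [mdigit_add x y h, add_mul]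

lemma mortonCoord_sum_pow (d L r : ℕ) (F : Finset ℕ) :
    mortonCoord d L r (∑ p ∈ F, 2 ^ p) =
      ∑ ℓ ∈ Finset.range L, (if ℓ * d + (r - 1) ∈ F then 1 else 0) * 2 ^ ℓ := by
  simp only [mortonCoord_eq]
  exact Finset.sum_congr rfl fun ℓ _ => by rw [mdigit_sum_pow]

lemma pos_decomp {d ℓ s l' s' : ℕ} (hs : s < d) (hs' : s' < d) :
    ℓ * d + s = l' * d + s' ↔ ℓ = l' ∧ s = s' := by
  constructor
  · intro h
    have h1 : (ℓ * d + s) % d = s := by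
      rw [add_comm, Nat.add_mul_mod_self_right, Nat.mod_eq_of_lt hs]
    have h2 : (l' * d + s') % d = s' := by
      rw [add_comm, Nat.add_mul_mod_self_right, Nat.mod_eq_of_lt hs']
    have h3 : s = s' := by rw [← h1, h, h2]
    refine ⟨?_, h3⟩
    have hd : 0 < d := lt_of_le_of_lt (Nat.zero_le s) hs
    have h4 : ℓ * d = l' * d := by omega
    exact Nat.eq_of_mul_eq_mul_right hd h4
  · rintro ⟨rfl, rfl⟩; rfl

/-- the "staircase" quadrant: bits at positions `ℓ*d + j%d` for `ℓ < j/d` -/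
def mw (d j : ℕ) : ℕ := ∑ p ∈ (Finset.range j).filter (fun p => p % d = j % d), 2 ^ p

/-- complement of `mw` inside the block `[0, 2^j)` -/
def mv (d j : ℕ) : ℕ := ∑ p ∈ (Finset.range j).filter (fun p => ¬ p % d = j % d), 2 ^ p

lemma mw_add_mv (d j : ℕ) : mw d j + mv d j = 2 ^ j - 1 := by
  rw [mw, mv, Finset.sum_filter_add_sum_filter_not, sum_range_two_pow]

lemma mw_lt (d j : ℕ) : mw d j ≤ 2 ^ j - 1 := le_trans (Nat.le_add_right _ _) (mw_add_mv d j).le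

lemma mv_lt (d j : ℕ) : mv d j ≤ 2 ^ j - 1 := le_trans (Nat.le_add_left _ _) (mw_add_mv d j).le

section coords

lemma decomp_eq {d j ℓ s : ℕ} (hd : 0 < d) (hs : s < d) :
    ℓ * d + s = j ↔ ℓ = j / d ∧ s = j % d := by
  have h1 : (ℓ * d + s) % d = s := by
    rw [add_comm, Nat.add_mul_mod_self_right, Nat.mod_eq_of_lt hs]
  have h2 : (ℓ * d + s) / d = ℓ := by
    rw [add_comm, Nat.add_mul_div_right _ _ hd, Nat.div_eq_of_lt hs, zero_add]
  constructor
  · rintro rfl; exact ⟨h2.symm, h1.symm⟩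
  · rintro ⟨rfl, rfl⟩; rw [mul_comm]; exact Nat.div_add_mod j d

lemma decomp_lt {d j ℓ : ℕ} (hd : 0 < d) : ℓ * d + j % d < j ↔ ℓ < j / d := by
  have h' : d * (j / d) + j % d = j := Nat.div_add_mod j d
  constructor
  · intro hlt
    have h3 : ℓ * d < j / d * d := by
      have h4 : j / d * d = d * (j / d) := mul_comm _ _
      generalize hA : ℓ * d = A at *
      generalize hB : j / d * d = B at *
      omega
    exact Nat.lt_of_mul_lt_mul_right h3
  · intro hlt
    have h3 : ℓ * d < j / d * d := (Nat.mul_lt_mul_right hd).mpr hlt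
    have h4 : j / d * d = d * (j / d) := mul_comm _ _
    generalize hA : ℓ * d = A at *
    generalize hB : j / d * d = B at *
    omega

variable {d L j s : ℕ}

lemma hqL (hd : 0 < d) (hj : j < d * L) : j / d < L :=
  (Nat.div_lt_iff_lt_mul hd).mpr (by rw [mul_comm]; exact hj)

lemma sum_ind_eq (L q : ℕ) (hq : q < L) :
    ∑ ℓ ∈ Finset.range L, (if ℓ = q then 1 else 0) * 2 ^ ℓ = 2 ^ q := by
  rw [Finset.sum_eq_single q]
  · simp
  · intro b _ hb; simp [hb]
  · intro h; exact absurd (Finset.mem_range.mpr hq) h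

lemma sum_ind_lt (L q : ℕ) (hq : q ≤ L) :
    ∑ ℓ ∈ Finset.range L, (if ℓ < q then 1 else 0) * 2 ^ ℓ = 2 ^ q - 1 := by
  have h1 : ∀ ℓ ∈ Finset.range L, (if ℓ < q then 1 else 0) * 2 ^ ℓ
      = if ℓ < q then 2 ^ ℓ else 0 := by
    intro ℓ _; split <;> simp
  rw [Finset.sum_congr rfl h1, ← Finset.sum_filter]
  have h2 : (Finset.range L).filter (fun ℓ => ℓ < q) = Finset.range q := by
    ext x
    simp only [Finset.mem_filter, Finset.mem_range]
    omega
  rw [h2, sum_range_two_pow]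

variable (hd : 0 < d) (hj : j < d * L) (hs1 : 1 ≤ s) (hsd : s ≤ d)
include hd hj hs1 hsd

lemma coord_pow : mortonCoord d L s (2 ^ j) = if s = j % d + 1 then 2 ^ (j / d) else 0 := by
  have h2 : (2:ℕ) ^ j = ∑ p ∈ ({j} : Finset ℕ), 2 ^ p := by simp
  rw [h2, mortonCoord_sum_pow]
  have hmod : j % d < d := Nat.mod_lt _ hd
  rcases eq_or_ne s (j % d + 1) with rfl | hne
  · rw [if_pos rfl]
    calc ∑ ℓ ∈ Finset.range L, (if ℓ * d + (j % d + 1 - 1) ∈ ({j} : Finset ℕ) then 1 else 0) * 2 ^ ℓ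
        = ∑ ℓ ∈ Finset.range L, (if ℓ = j / d then 1 else 0) * 2 ^ ℓ := by
          refine Finset.sum_congr rfl fun ℓ _ => ?_
          congr 1
          refine if_congr ?_ rfl rfl
          simp only [Nat.add_sub_cancel, Finset.mem_singleton]
          rw [decomp_eq hd hmod]
          simp
      _ = 2 ^ (j / d) := sum_ind_eq L _ (hqL hd hj)
  · rw [if_neg hne]
    apply Finset.sum_eq_zero
    intro ℓ _
    suffices h : ¬(ℓ * d + (s - 1) = j) by simp [Finset.mem_singleton, h]
    rw [decomp_eq hd (by omega)]
    rintro ⟨-, h2⟩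
    exact hne (by omega)

lemma coord_mw : mortonCoord d L s (mw d j) = if s = j % d + 1 then 2 ^ (j / d) - 1 else 0 := by
  rw [mw, mortonCoord_sum_pow]
  have hmod : j % d < d := Nat.mod_lt _ hd
  have hmem : ∀ ℓ : ℕ, (ℓ * d + (s - 1) ∈ (Finset.range j).filter (fun p => p % d = j % d)) ↔
      (ℓ * d + (s - 1) < j ∧ s - 1 = j % d) := by
    intro ℓ
    rw [Finset.mem_filter, Finset.mem_range]
    have h : (ℓ * d + (s - 1)) % d = s - 1 := by
      rw [add_comm, Nat.add_mul_mod_self_right, Nat.mod_eq_of_lt (by omega)]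
    rw [h]
  rcases eq_or_ne s (j % d + 1) with rfl | hne
  · rw [if_pos rfl]
    calc ∑ ℓ ∈ Finset.range L, (if ℓ * d + (j % d + 1 - 1) ∈ (Finset.range j).filter
          (fun p => p % d = j % d) then 1 else 0) * 2 ^ ℓ
        = ∑ ℓ ∈ Finset.range L, (if ℓ < j / d then 1 else 0) * 2 ^ ℓ := by
          refine Finset.sum_congr rfl fun ℓ _ => ?_
          congr 1
          refine if_congr ?_ rfl rfl
          rw [hmem ℓ]
          simp only [Nat.add_sub_cancel]
          rw [decomp_lt hd]
          simp
      _ = 2 ^ (j / d) - 1 := sum_ind_lt L _ (hqL hd hj).le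
  · rw [if_neg hne]
    apply Finset.sum_eq_zero
    intro ℓ _
    suffices h : ¬(ℓ * d + (s - 1) ∈ (Finset.range j).filter (fun p => p % d = j % d)) by
      simp only [h]; simp
    rw [hmem ℓ]
    rintro ⟨-, h2⟩
    exact hne (by omega)

omit hd hj in
lemma coord_mv_ne (hne : s ≠ j % d + 1) :
    mortonCoord d L s (mv d j) = mortonCoord d L s (2 ^ j - 1) := by
  have h1 : (2:ℕ) ^ j - 1 = ∑ p ∈ Finset.range j, 2 ^ p := (sum_range_two_pow j).symm
  rw [mv, h1, mortonCoord_sum_pow, mortonCoord_sum_pow]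
  refine Finset.sum_congr rfl fun ℓ _ => ?_
  congr 1
  have hmod : (ℓ * d + (s - 1)) % d = s - 1 := by
    rw [add_comm, Nat.add_mul_mod_self_right, Nat.mod_eq_of_lt (by omega)]
  refine if_congr ?_ rfl rfl
  simp only [Finset.mem_filter, Finset.mem_range, hmod]
  have h : ¬ (s - 1 = j % d) := fun h => hne (by omega)
  tauto

omit hj hs1 hsd in
lemma coord_mv_eq : mortonCoord d L (j % d + 1) (mv d j) = 0 := by
  rw [mv, mortonCoord_sum_pow]
  apply Finset.sum_eq_zero
  intro ℓ _
  have hmod : (ℓ * d + j % d) % d = j % d := by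
    rw [add_comm, Nat.add_mul_mod_self_right, Nat.mod_eq_of_lt (Nat.mod_lt _ hd)]
  simp only [Nat.add_sub_cancel]
  simp [Finset.mem_filter, hmod]

omit hs1 hsd in
lemma coord_pow_sub_one_eq : mortonCoord d L (j % d + 1) (2 ^ j - 1) = 2 ^ (j / d) - 1 := by
  have h1 : (2:ℕ) ^ j - 1 = mw d j + mv d j := (mw_add_mv d j).symm
  have hdisj : ∀ i, mdigit (mw d j) i = 0 ∨ mdigit (mv d j) i = 0 := by
    intro i
    rw [mw, mv, mdigit_sum_pow, mdigit_sum_pow]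
    rcases Decidable.em (i % d = j % d) with h | h
    · right; simp [Finset.mem_filter, h]
    · left; simp [Finset.mem_filter, h]
  have hmod : j % d < d := Nat.mod_lt _ hd
  rw [h1, mortonCoord_add d L _ hdisj,
    coord_mw (s := j % d + 1) hd hj (by omega) (by omega), coord_mv_eq hd]
  simp

end coords

lemma nbr_symm {d L p q : ℕ} (h : MortonFaceNbr d L p q) : MortonFaceNbr d L q p := by
  obtain ⟨hne, r, hr1, hrd, habs, hoth⟩ := h
  exact ⟨hne.symm, r, hr1, hrd, by omega,
    fun s h1 h2 h3 => (hoth s h1 h2 h3).symm⟩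

lemma nbr_pow_mw {d L j : ℕ} (hd : 0 < d) (hj : j < d * L) :
    MortonFaceNbr d L (2 ^ j) (mw d j) := by
  have hmod : j % d < d := Nat.mod_lt _ hd
  have h1 : (1:ℕ) ≤ 2 ^ j := Nat.one_le_two_pow
  refine ⟨by have := mw_lt d j; omega, j % d + 1, by omega, by omega, ?_, ?_⟩
  · rw [coord_pow (s := j % d + 1) hd hj (by omega) (by omega),
      coord_mw (s := j % d + 1) hd hj (by omega) (by omega), if_pos rfl, if_pos rfl]
    have h2 : (1:ℕ) ≤ 2 ^ (j / d) := Nat.one_le_two_pow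
    omega
  · intro s hs1 hsd hne
    rw [coord_pow hd hj hs1 hsd, coord_mw hd hj hs1 hsd, if_neg hne, if_neg hne]

lemma nbr_pow_add_mv {d L j : ℕ} (hd : 0 < d) (hj : j < d * L) :
    MortonFaceNbr d L (2 ^ j + mv d j) (2 ^ j - 1) := by
  have hmod : j % d < d := Nat.mod_lt _ hd
  have h1 : (1:ℕ) ≤ 2 ^ j := Nat.one_le_two_pow
  have hdisj : ∀ i, mdigit (2 ^ j) i = 0 ∨ mdigit (mv d j) i = 0 := by
    intro i
    rcases eq_or_ne i j with rfl | hne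
    · right
      rw [mv, mdigit_sum_pow]
      simp [Finset.mem_filter]
    · left; rw [mdigit_two_pow]; simp [hne]
  refine ⟨by omega, j % d + 1, by omega, by omega, ?_, ?_⟩
  · rw [mortonCoord_add d L _ hdisj, coord_pow (s := j % d + 1) hd hj (by omega) (by omega),
      coord_mv_eq hd, coord_pow_sub_one_eq hd hj, if_pos rfl]
    have h2 : (1:ℕ) ≤ 2 ^ (j / d) := Nat.one_le_two_pow
    omega
  · intro s hs1 hsd hne
    rw [mortonCoord_add d L _ hdisj, coord_pow hd hj hs1 hsd, if_neg hne,
      coord_mv_ne hs1 hsd hne]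
    omega

lemma nbr_shift {d L J m p p' : ℕ} (hm : m % 2 ^ J = 0) (hp : p < 2 ^ J) (hp' : p' < 2 ^ J)
    (h : MortonFaceNbr d L p p') : MortonFaceNbr d L (m + p) (m + p') := by
  obtain ⟨hne, r, hr1, hrd, habs, hoth⟩ := h
  refine ⟨by omega, r, hr1, hrd, ?_, ?_⟩
  · rw [mortonCoord_add d L r (mdigit_disj_block hm hp),
      mortonCoord_add d L r (mdigit_disj_block hm hp')]
    push_cast
    omega
  · intro s h1 h2 h3
    rw [mortonCoord_add d L s (mdigit_disj_block hm hp),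
      mortonCoord_add d L s (mdigit_disj_block hm hp'), hoth s h1 h2 h3]

open Relation in
/-- Every element of a prefix segment `[0, y]` of an aligned block `[0, 2^j)` is connected
to `0` inside the segment. -/
lemma prefix_conn (d L : ℕ) (hd : 0 < d) :
    ∀ j, j ≤ d * L → ∀ y, y < 2 ^ j → ∀ x, x ≤ y →
    Relation.ReflTransGen (fun p q => p ≤ y ∧ q ≤ y ∧ MortonFaceNbr d L p q) x 0 := by
  intro j
  induction j with
  | zero =>
    intro _ y hy x hx
    have hx0 : x = 0 := by simp at hy; omega
    subst hx0
    exact Relation.ReflTransGen.refl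
  | succ j ih =>
    intro hjle y hy x hx
    have hjle' : j ≤ d * L := by omega
    rcases lt_or_ge y (2 ^ j) with hy' | hy'
    · exact ih hjle' y hy' x hx
    · have hjlt : j < d * L := by omega
      have hpow : (1:ℕ) ≤ 2 ^ j := Nat.one_le_two_pow
      have low : ∀ x', x' ≤ 2 ^ j - 1 →
          Relation.ReflTransGen (fun p q => p ≤ y ∧ q ≤ y ∧ MortonFaceNbr d L p q) x' 0 := by
        intro x' hx'
        refine Relation.ReflTransGen.mono ?_ _ _
          (ih hjle' (2 ^ j - 1) (by omega) x' hx')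
        rintro p q ⟨h1, h2, h3⟩
        exact ⟨by omega, by omega, h3⟩
      rcases lt_or_ge x (2 ^ j) with hx' | hx'
      · exact low x (by omega)
      · have hy2 : y - 2 ^ j < 2 ^ j := by
          have : y < 2 ^ (j + 1) := hy
          rw [pow_succ] at this
          omega
        have mid := ih hjle' (y - 2 ^ j) hy2 (x - 2 ^ j) (by omega)
        have lifted : Relation.ReflTransGen
            (fun p q => p ≤ y ∧ q ≤ y ∧ MortonFaceNbr d L p q) x (2 ^ j) := by
          have hlift := Relation.ReflTransGen.lift
            (p := fun p q => p ≤ y ∧ q ≤ y ∧ MortonFaceNbr d L p q)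
            (fun t => 2 ^ j + t)
            (fun p q hpq => by
              show 2 ^ j + p ≤ y ∧ 2 ^ j + q ≤ y ∧ MortonFaceNbr d L (2 ^ j + p) (2 ^ j + q)
              obtain ⟨h1, h2, h3⟩ := hpq
              exact ⟨by omega, by omega,
                nbr_shift (Nat.mod_self _) (by omega) (by omega) h3⟩) _ _ mid
          have hxx : 2 ^ j + (x - 2 ^ j) = x := by omega
          simpa only [hxx, Nat.add_zero, Function.onFun] using hlift
        have hmwy : mw d j ≤ 2 ^ j - 1 := mw_lt d j
        have step : Relation.ReflTransGen
            (fun p q => p ≤ y ∧ q ≤ y ∧ MortonFaceNbr d L p q) (2 ^ j) (mw d j) :=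
          Relation.ReflTransGen.single ⟨by omega, by omega, nbr_pow_mw hd hjlt⟩
        exact (lifted.trans step).trans (low (mw d j) hmwy)

open Relation in
/-- Every element of a suffix segment `[x0, 2^j)` of an aligned block is connected
to `2^j - 1` inside the segment. -/
lemma suffix_conn (d L : ℕ) (hd : 0 < d) :
    ∀ j, j ≤ d * L → ∀ x0 x, x0 ≤ x → x < 2 ^ j →
    Relation.ReflTransGen
      (fun p q => x0 ≤ p ∧ p < 2 ^ j ∧ x0 ≤ q ∧ q < 2 ^ j ∧ MortonFaceNbr d L p q)
      x (2 ^ j - 1) := by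
  intro j
  induction j with
  | zero =>
    intro _ x0 x hx0 hx
    have hx' : x = 0 := by simp at hx; omega
    subst hx'
    exact Relation.ReflTransGen.refl
  | succ j ih =>
    intro hjle x0 x hx0 hx
    have hjle' : j ≤ d * L := by omega
    have hjlt : j < d * L := by omega
    have hpow : (1:ℕ) ≤ 2 ^ j := Nat.one_le_two_pow
    have hx2 : x < 2 * 2 ^ j := by rw [← pow_succ']; exact hx
    have htop : (2:ℕ) ^ (j + 1) - 1 = 2 ^ j + (2 ^ j - 1) := by
      rw [pow_succ]; omega
    -- lift of a path in the upper half
    have lift_up : ∀ z z0, z0 ≤ z → z < 2 ^ j → x0 ≤ 2 ^ j + z0 →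
        Relation.ReflTransGen
          (fun p q => x0 ≤ p ∧ p < 2 ^ (j+1) ∧ x0 ≤ q ∧ q < 2 ^ (j+1) ∧ MortonFaceNbr d L p q)
          (2 ^ j + z) (2 ^ (j+1) - 1) := by
      intro z z0 hz0 hz hx0z
      have hlift := Relation.ReflTransGen.lift
        (p := fun p q => x0 ≤ p ∧ p < 2 ^ (j+1) ∧ x0 ≤ q ∧ q < 2 ^ (j+1) ∧
          MortonFaceNbr d L p q)
        (fun t => 2 ^ j + t)
        (fun p q hpq => by
          show x0 ≤ 2 ^ j + p ∧ 2 ^ j + p < 2 ^ (j+1) ∧ x0 ≤ 2 ^ j + q ∧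
            2 ^ j + q < 2 ^ (j+1) ∧ MortonFaceNbr d L (2 ^ j + p) (2 ^ j + q)
          obtain ⟨h1, h2, h3, h4, h5⟩ := hpq
          refine ⟨by omega, by rw [pow_succ]; omega, by omega, by rw [pow_succ]; omega,
            nbr_shift (Nat.mod_self _) h2 h4 h5⟩)
        _ _ (ih hjle' z0 z hz0 hz)
      simpa only [← htop, Function.onFun] using hlift
    rcases le_or_gt (2 ^ j) x with hxu | hxl
    · rcases le_or_gt (2 ^ j) x0 with hx0u | hx0l
      · have h := lift_up (x - 2 ^ j) (x0 - 2 ^ j) (by omega) (by omega) (by omega)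
        have hxx : 2 ^ j + (x - 2 ^ j) = x := by omega
        rw [hxx] at h
        exact h
      · have h := lift_up (x - 2 ^ j) 0 (by omega) (by omega) (by omega)
        have hxx : 2 ^ j + (x - 2 ^ j) = x := by omega
        rw [hxx] at h
        exact h
    · -- x in lower half, so x0 < 2^j as well
      have hlow : Relation.ReflTransGen
          (fun p q => x0 ≤ p ∧ p < 2 ^ (j+1) ∧ x0 ≤ q ∧ q < 2 ^ (j+1) ∧ MortonFaceNbr d L p q)
          x (2 ^ j - 1) := by
        refine Relation.ReflTransGen.mono ?_ _ _ (ih hjle' x0 x hx0 hxl)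
        rintro p q ⟨h1, h2, h3, h4, h5⟩
        exact ⟨h1, by rw [pow_succ]; omega, h3, by rw [pow_succ]; omega, h5⟩
      have hmv : mv d j ≤ 2 ^ j - 1 := mv_lt d j
      have step : Relation.ReflTransGen
          (fun p q => x0 ≤ p ∧ p < 2 ^ (j+1) ∧ x0 ≤ q ∧ q < 2 ^ (j+1) ∧ MortonFaceNbr d L p q)
          (2 ^ j - 1) (2 ^ j + mv d j) :=
        Relation.ReflTransGen.single ⟨by omega, by rw [pow_succ]; omega, by omega,
          by rw [pow_succ]; omega, nbr_symm (nbr_pow_add_mv hd hjlt)⟩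
      have last := lift_up (mv d j) 0 (by omega) (by omega) (by omega)
      exact (hlow.trans step).trans last

lemma conn_of_target {d L : ℕ} {S : Set ℕ} (t : ℕ)
    (h : ∀ R ∈ S, Relation.ReflTransGen
      (fun a b => a ∈ S ∧ b ∈ S ∧ MortonFaceNbr d L a b) R t) :
    MortonFaceConnected d L S := by
  intro Q hQ Q' hQ'
  have hsym : Symmetric (fun a b => a ∈ S ∧ b ∈ S ∧ MortonFaceNbr d L a b) :=
    fun p q hpq => ⟨hpq.2.1, hpq.1, nbr_symm hpq.2.2⟩
  exact (h Q hQ).trans (@Std.Symm.symm _ _ (@Relation.ReflTransGen.stdSymm _ _ ⟨fun _ _ hab => hsym hab⟩) _ _ (h Q' hQ'))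

lemma conn_upper (d L j0 m b : ℕ) (hd : 0 < d) (hj0 : j0 ≤ d * L) (hm : m % 2 ^ j0 = 0)
    (hmb : m ≤ b) (hb : b < m + 2 ^ j0) : MortonFaceConnected d L (Set.Icc m b) := by
  refine conn_of_target m ?_
  intro R hR
  rw [Set.mem_Icc] at hR
  obtain ⟨hR1, hR2⟩ := hR
  have hy : b - m < 2 ^ j0 := by omega
  have path := prefix_conn d L hd j0 hj0 (b - m) hy (R - m) (by omega)
  have hlift := Relation.ReflTransGen.lift
    (p := fun p q => p ∈ Set.Icc m b ∧ q ∈ Set.Icc m b ∧ MortonFaceNbr d L p q)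
    (fun t => m + t)
    (fun p q hpq => by
      show (m + p) ∈ Set.Icc m b ∧ (m + q) ∈ Set.Icc m b ∧ MortonFaceNbr d L (m + p) (m + q)
      obtain ⟨h1, h2, h3⟩ := hpq
      exact ⟨Set.mem_Icc.mpr ⟨by omega, by omega⟩, Set.mem_Icc.mpr ⟨by omega, by omega⟩,
        nbr_shift hm (by omega) (by omega) h3⟩) _ _ path
  simpa only [(show m + (R - m) = R by omega), Nat.add_zero, Function.onFun] using hlift

lemma conn_lower (d L j0 m a : ℕ) (hd : 0 < d) (hj0 : j0 ≤ d * L) (hm : m % 2 ^ j0 = 0)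
    (ham : a < m) (ha : m ≤ a + 2 ^ j0) : MortonFaceConnected d L (Set.Icc a (m - 1)) := by
  have hpow : (1:ℕ) ≤ 2 ^ j0 := Nat.one_le_two_pow
  have hm2 : 2 ^ j0 ≤ m := Nat.le_of_dvd (by omega) (Nat.dvd_of_mod_eq_zero hm)
  have hm' : (m - 2 ^ j0) % 2 ^ j0 = 0 := by
    have h1 : m - 2 ^ j0 + 2 ^ j0 = m := by omega
    have h2 := Nat.add_mod_right (m - 2 ^ j0) (2 ^ j0)
    rw [h1] at h2
    omega
  refine conn_of_target (m - 1) ?_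
  intro R hR
  rw [Set.mem_Icc] at hR
  obtain ⟨hR1, hR2⟩ := hR
  have path := suffix_conn d L hd j0 hj0 (a - (m - 2 ^ j0)) (R - (m - 2 ^ j0))
    (by omega) (by omega)
  have hlift := Relation.ReflTransGen.lift
    (p := fun p q => p ∈ Set.Icc a (m - 1) ∧ q ∈ Set.Icc a (m - 1) ∧ MortonFaceNbr d L p q)
    (fun t => (m - 2 ^ j0) + t)
    (fun p q hpq => by
      show (m - 2 ^ j0 + p) ∈ Set.Icc a (m - 1) ∧ (m - 2 ^ j0 + q) ∈ Set.Icc a (m - 1) ∧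
        MortonFaceNbr d L (m - 2 ^ j0 + p) (m - 2 ^ j0 + q)
      obtain ⟨h1, h2, h3, h4, h5⟩ := hpq
      exact ⟨Set.mem_Icc.mpr ⟨by omega, by omega⟩, Set.mem_Icc.mpr ⟨by omega, by omega⟩,
        nbr_shift hm' h2 h4 h5⟩) _ _ path
  simpa only [(show m - 2 ^ j0 + (R - (m - 2 ^ j0)) = R by omega),
    (show m - 2 ^ j0 + (2 ^ j0 - 1) = m - 1 by omega), Function.onFun] using hlift

/-- In a tree uniformly refined to level `L`, any contiguous segment of the Morton curve
has at most two face-connected components. -/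
theorem morton_segment_at_most_two_components (d L a b : ℕ) (hd : 1 ≤ d)
    (hab : a ≤ b) (hb : b < 2 ^ (d * L)) :
    MortonCompBound d L (Set.Icc a b) 2 := by
  rcases eq_or_lt_of_le hab with rfl | hlt
  · refine ⟨fun _ => Set.Icc a a, by simp [Set.iUnion_const], fun i Q hQ Q' hQ' => ?_⟩
    rw [Set.mem_Icc] at hQ hQ'
    have h1 : Q = a := by omega
    have h2 : Q' = a := by omega
    subst h1; subst h2
    exact Relation.ReflTransGen.refl
  · have hP0 : (a / 2 ^ 0 + 1) * 2 ^ 0 ≤ b := by simpa using hlt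
    set P : ℕ → Prop := fun j => (a / 2 ^ j + 1) * 2 ^ j ≤ b with hPdef
    have hPd : DecidablePred P := fun j => by rw [hPdef]; infer_instance
    set j0 := @Nat.findGreatest P hPd (d * L) with hj0def
    have hPj0 : P j0 := Nat.findGreatest_spec (Nat.zero_le _) hP0
    have hj0le : j0 ≤ d * L := Nat.findGreatest_le _
    have hpow : (1:ℕ) ≤ 2 ^ j0 := Nat.one_le_two_pow
    have hdiv := Nat.div_add_mod a (2 ^ j0)
    have hmod : a % 2 ^ j0 < 2 ^ j0 := Nat.mod_lt _ (by omega)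
    set m := (a / 2 ^ j0 + 1) * 2 ^ j0 with hmdef
    have hmeq : m = 2 ^ j0 * (a / 2 ^ j0) + 2 ^ j0 := by rw [hmdef]; ring
    have ham : a < m := by omega
    have hmb : m ≤ b := hPj0
    have hm_mod : m % 2 ^ j0 = 0 := by rw [hmdef]; exact Nat.mul_mod_left _ _
    have hj0lt : j0 < d * L := by
      rcases eq_or_lt_of_le hj0le with heq | h
      · exfalso
        have h2 : (2:ℕ) ^ j0 ≤ m := by omega
        have h3 : (2:ℕ) ^ j0 = 2 ^ (d * L) := by rw [heq]
        omega
      · exact h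
    have hnotP : ¬ P (j0 + 1) :=
      Nat.findGreatest_is_greatest (n := d * L) (k := j0 + 1) (by omega) (by omega)
    have hmult : ∀ t : ℕ, a < t * 2 ^ (j0 + 1) → ¬ (t * 2 ^ (j0 + 1) ≤ b) := by
      intro t h1 h2
      apply hnotP
      have hpow1 : (1:ℕ) ≤ 2 ^ (j0 + 1) := Nat.one_le_two_pow
      have ht : a / 2 ^ (j0 + 1) < t := by
        by_contra hc
        push_neg at hc
        have h3 : t * 2 ^ (j0 + 1) ≤ a / 2 ^ (j0 + 1) * 2 ^ (j0 + 1) :=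
          Nat.mul_le_mul_right _ hc
        have h4 : a / 2 ^ (j0 + 1) * 2 ^ (j0 + 1) ≤ a := Nat.div_mul_le_self a _
        omega
      show (a / 2 ^ (j0 + 1) + 1) * 2 ^ (j0 + 1) ≤ b
      calc (a / 2 ^ (j0 + 1) + 1) * 2 ^ (j0 + 1) ≤ t * 2 ^ (j0 + 1) :=
            Nat.mul_le_mul_right _ (by omega)
        _ ≤ b := h2
    have hbm : b < m + 2 ^ j0 := by
      by_contra hc
      push_neg at hc
      rcases Nat.even_or_odd (a / 2 ^ j0 + 1) with ⟨u, hu⟩ | ⟨u, hu⟩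
      · have he : u * 2 ^ (j0 + 1) = m := by rw [hmdef, hu, pow_succ]; ring
        exact hmult u (by omega) (by omega)
      · have he : (u + 1) * 2 ^ (j0 + 1) = m + 2 ^ j0 := by rw [hmdef, hu, pow_succ]; ring
        exact hmult (u + 1) (by omega) (by omega)
    have ham2 : m ≤ a + 2 ^ j0 := by
      by_contra hc
      push_neg at hc
      rcases Nat.even_or_odd (a / 2 ^ j0 + 1) with ⟨u, hu⟩ | ⟨u, hu⟩
      · have he : u * 2 ^ (j0 + 1) = m := by rw [hmdef, hu, pow_succ]; ring
        exact hmult u (by omega) (by omega)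
      · have he : u * 2 ^ (j0 + 1) = m - 2 ^ j0 := by
          have : m = u * 2 ^ (j0 + 1) + 2 ^ j0 := by rw [hmdef, hu, pow_succ]; ring
          omega
        exact hmult u (by omega) (by omega)
    refine ⟨![Set.Icc a (m - 1), Set.Icc m b], ?_, ?_⟩
    · ext x
      simp only [Set.mem_iUnion, Fin.exists_fin_two, Matrix.cons_val_zero,
        Matrix.cons_val_one, Matrix.head_cons, Set.mem_Icc]
      omega
    · intro i
      fin_cases i
      · simpa using conn_lower d L j0 m a (by omega) hj0le hm_mod ham ham2
      · simpa using conn_upper d L j0 m b (by omega) hj0le hm_mod hmb hbm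
end
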